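/- Let θ be an infinite regular cardinal and (λ_i : i < θ) a sequence of cardinals. Let (η_α : α < δ) be a sequence of pairwise distinct functions with η_α ∈ ∏_{i<θ} λ_i, and for each i < θ let c_i : [λ_i]² → {0,1} be a coloring such that whenever α < β < γ < λ_i and c_i({α,β}) = c_i({α,γ}) = c_i({β,γ}) = ε, then ε = 0. Define c : [δ]² → θ × {0,1} by: for α < β < δ, let i = i(α,β) be the least j with η_α(j) ≠ η_β(j) and ε = c_i({η_α(i), η_β(i)}); set c({α,β}) = (i, ε) if ε > 0, and c({α,β}) = (0,0) otherwise. Then for every i < θ, no 3-element subset of δ is constantly colored (i, 1) by c. -/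
import Mathlib


open Cardinal Ordinal Set

lemma pair_aux (θ : Cardinal.{0})
    (δ : Ordinal.{0})
    (η : Ordinal.{0} → Ordinal.{0} → Ordinal.{0})
    (c : Ordinal.{0} → Ordinal.{0} → Ordinal.{0} → Fin 2)
    (C : Ordinal.{0} → Ordinal.{0} → Ordinal.{0} × Fin 2)
    (hη_distinct : ∀ α β : Ordinal, α < δ → β < δ → α ≠ β → ∃ i < θ.ord, η α i ≠ η β i)
    (hC : ∀ α β : Ordinal, α < β → β < δ →
      C α β =
        if c (sInf {j | η α j ≠ η β j}) (η α (sInf {j | η α j ≠ η β j}))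
            (η β (sInf {j | η α j ≠ η β j})) = 1
        then (sInf {j | η α j ≠ η β j}, 1) else (0, 0))
    (i : Ordinal) (α β : Ordinal) (hαβ : α < β) (hβδ : β < δ)
    (h : C α β = (i, 1)) : η α i ≠ η β i ∧ c i (η α i) (η β i) = 1 := by
  have hne : ({j | η α j ≠ η β j} : Set Ordinal).Nonempty := by
    obtain ⟨j, _, hj⟩ := hη_distinct α β (hαβ.trans hβδ) hβδ (ne_of_lt hαβ)
    exact ⟨j, hj⟩
  have hmem := csInf_mem hne
  rw [hC α β hαβ hβδ] at h
  split_ifs at h with hcond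
  · obtain ⟨h1, _⟩ := Prod.mk.injEq .. ▸ h
    have hi : sInf {j | η α j ≠ η β j} = i := by
      simpa using congrArg Prod.fst h
    rw [hi] at hmem hcond
    exact ⟨hmem, hcond⟩
  · exact absurd (congrArg Prod.snd h) (by simp)

theorem stmt6 (θ : Cardinal.{0}) (hθ : θ.IsRegular)
    (lm : Ordinal.{0} → Cardinal.{0}) (δ : Ordinal.{0})
    (η : Ordinal.{0} → Ordinal.{0} → Ordinal.{0})
    (c : Ordinal.{0} → Ordinal.{0} → Ordinal.{0} → Fin 2)
    (C : Ordinal.{0} → Ordinal.{0} → Ordinal.{0} × Fin 2)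
    (hη_mem : ∀ α < δ, ∀ i < θ.ord, η α i < (lm i).ord)
    (hη_distinct : ∀ α β : Ordinal, α < δ → β < δ → α ≠ β → ∃ i < θ.ord, η α i ≠ η β i)
    (hc_sym : ∀ i a b : Ordinal, c i a b = c i b a)
    (hc_tri : ∀ i < θ.ord, ∀ a b g : Ordinal, a < b → b < g → g < (lm i).ord →
      ∀ ε : Fin 2, c i a b = ε → c i a g = ε → c i b g = ε → ε = 0)
    (hC : ∀ α β : Ordinal, α < β → β < δ →
      C α β =
        if c (sInf {j | η α j ≠ η β j}) (η α (sInf {j | η α j ≠ η β j}))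
            (η β (sInf {j | η α j ≠ η β j})) = 1
        then (sInf {j | η α j ≠ η β j}, 1) else (0, 0)) :
    ∀ i < θ.ord, ¬ ∃ α β γ : Ordinal, α < β ∧ β < γ ∧ γ < δ ∧
      C α β = (i, 1) ∧ C α γ = (i, 1) ∧ C β γ = (i, 1) := by
  rintro i hi ⟨α, β, γ, hαβ, hβγ, hγδ, h1, h2, h3⟩
  obtain ⟨hab, cab⟩ := pair_aux θ δ η c C hη_distinct hC i α β hαβ (hβγ.trans hγδ) h1
  obtain ⟨hag, cag⟩ := pair_aux θ δ η c C hη_distinct hC i α γ (hαβ.trans hβγ) hγδ h2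
  obtain ⟨hbg, cbg⟩ := pair_aux θ δ η c C hη_distinct hC i β γ hβγ hγδ h3
  set a := η α i
  set b := η β i
  set g := η γ i
  have ha : a < (lm i).ord := hη_mem α ((hαβ.trans hβγ).trans hγδ) i hi
  have hb : b < (lm i).ord := hη_mem β (hβγ.trans hγδ) i hi
  have hg : g < (lm i).ord := hη_mem γ hγδ i hi
  have tri := hc_tri i hi
  have : (1 : Fin 2) = 0 := by
    rcases lt_trichotomy a b with h | h | h
    · rcases lt_trichotomy b g with h' | h' | h'
      · exact tri a b g h h' hg 1 cab cag cbg
      · exact absurd h' hbg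
      · rcases lt_trichotomy a g with h'' | h'' | h''
        · exact tri a g b h'' h' hb 1 cag cab (hc_sym i g b ▸ cbg)
        · exact absurd h'' hag
        · exact tri g a b h'' h hb 1 (hc_sym i g a ▸ cag) (hc_sym i g b ▸ cbg) cab
    · exact absurd h hab
    · rcases lt_trichotomy a g with h' | h' | h'
      · exact tri b a g h h' hg 1 (hc_sym i b a ▸ cab) cbg cag
      · exact absurd h' hag
      · rcases lt_trichotomy b g with h'' | h'' | h''
        · exact tri b g a h'' h' ha 1 cbg (hc_sym i b a ▸ cab) (hc_sym i g a ▸ cag)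
        · exact absurd h'' hbg
        · exact tri g b a h'' h ha 1 (hc_sym i g b ▸ cbg) (hc_sym i g a ▸ cag)
            (hc_sym i b a ▸ cab)
  simp at this
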